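/- Let a, b ∈ ℂ and let I ⊆ F be the two-sided ideal generated by the three elements x₂x₁ − x₁x₂, x₃x₁ − x₁x₃ − a x₁², and x₃x₂ − x₂x₃ + (b − 2a) x₁x₂. Then the images in F/I of the monomials x₁^{a₁} x₂^{a₂} x₃^{a₃}, over all a₁, a₂, a₃ ∈ ℕ, form a ℂ-basis of F/I. (This quotient is the Nichols algebra associated to the braiding of type R_{1,1} with t = 1; in particular it has Gelfand–Kirillov dimension 3.) -/
import Mathlib


/-- The free associative unital `ℂ`-algebra on three generators. -/
abbrev F : Type := FreeAlgebra ℂ (Fin 3)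

/-- The generators `x₁ = X 0`, `x₂ = X 1`, `x₃ = X 2`. -/
noncomputable def X (i : Fin 3) : F := FreeAlgebra.ι ℂ i

/-- The generating set of the ideal: `x₂x₁ − x₁x₂`, `x₃x₁ − x₁x₃ − a x₁²`,
`x₃x₂ − x₂x₃ + (b − 2a) x₁x₂`. -/
noncomputable def S (a b : ℂ) : Set F :=
  {X 1 * X 0 - X 0 * X 1,
   X 2 * X 0 - X 0 * X 2 - a • (X 0 * X 0),
   X 2 * X 1 - X 1 * X 2 + (b - 2 * a) • (X 0 * X 1)}

/-- The relation whose two-sided-ideal closure is the ideal generated by `S a b`;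
`RingQuot (rel a b)` is the quotient `F/I`. -/
def rel (a b : ℂ) : F → F → Prop := fun x y => x ∈ S a b ∧ y = 0

abbrev V : Type := (ℕ × ℕ × ℕ) →₀ ℂ

noncomputable def coef (a b : ℂ) (t : ℕ × ℕ × ℕ) : ℂ := t.1 * a - t.2.1 * (b - 2 * a)

noncomputable def T (a b : ℂ) : Fin 3 → Module.End ℂ V :=
  ![Finsupp.lmapDomain ℂ ℂ (fun t => (t.1 + 1, t.2.1, t.2.2)),
    Finsupp.lmapDomain ℂ ℂ (fun t => (t.1, t.2.1 + 1, t.2.2)),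
    Finsupp.lsum ℂ (fun t => LinearMap.toSpanSingleton ℂ V
      (Finsupp.single (t.1, t.2.1, t.2.2 + 1) 1 + coef a b t • Finsupp.single (t.1 + 1, t.2.1, t.2.2) 1))]

lemma T0_single (a b : ℂ) (t : ℕ × ℕ × ℕ) (r : ℂ) :
    T a b 0 (Finsupp.single t r) = Finsupp.single (t.1 + 1, t.2.1, t.2.2) r := by
  simp [T, Finsupp.mapDomain_single]

lemma T1_single (a b : ℂ) (t : ℕ × ℕ × ℕ) (r : ℂ) :
    T a b 1 (Finsupp.single t r) = Finsupp.single (t.1, t.2.1 + 1, t.2.2) r := by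
  simp [T, Finsupp.mapDomain_single]

lemma T2_single (a b : ℂ) (t : ℕ × ℕ × ℕ) (r : ℂ) :
    T a b 2 (Finsupp.single t r) =
      Finsupp.single (t.1, t.2.1, t.2.2 + 1) r + (r * coef a b t) • Finsupp.single (t.1 + 1, t.2.1, t.2.2) 1 := by
  simp [T, LinearMap.toSpanSingleton_apply, smul_add, smul_smul, Finsupp.smul_single, mul_comm]

lemma relE1 (a b : ℂ) : T a b 1 * T a b 0 = T a b 0 * T a b 1 := by
  apply Finsupp.lhom_ext (fun t r => ?_)
  simp only [Module.End.mul_apply, T0_single, T1_single]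

lemma relE2 (a b : ℂ) : T a b 2 * T a b 0 = T a b 0 * T a b 2 + a • (T a b 0 * T a b 0) := by
  apply Finsupp.lhom_ext (fun t r => ?_)
  simp only [Module.End.mul_apply, LinearMap.add_apply, LinearMap.smul_apply,
    T0_single, T1_single, T2_single, map_add, map_smul]
  have : coef a b (t.1 + 1, t.2.1, t.2.2) = coef a b t + a := by
    simp [coef]; push_cast; ring
  rw [this]
  simp [mul_add, add_smul, Finsupp.smul_single, add_assoc, smul_smul, mul_comm]

lemma relE3 (a b : ℂ) : T a b 2 * T a b 1 =
    T a b 1 * T a b 2 - (b - 2 * a) • (T a b 0 * T a b 1) := by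
  apply Finsupp.lhom_ext (fun t r => ?_)
  simp only [Module.End.mul_apply, LinearMap.sub_apply, LinearMap.smul_apply,
    T0_single, T1_single, T2_single, map_add, map_smul]
  have : coef a b (t.1, t.2.1 + 1, t.2.2) = coef a b t - (b - 2 * a) := by
    simp [coef]; push_cast; ring
  rw [this]
  simp [mul_sub, sub_smul, Finsupp.smul_single, smul_smul, mul_comm]
  abel

noncomputable def phi (a b : ℂ) : F →ₐ[ℂ] Module.End ℂ V := FreeAlgebra.lift ℂ (T a b)

lemma phi_X (a b : ℂ) (i : Fin 3) : phi a b (X i) = T a b i := by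
  simp [phi, X]

lemma phi_rel (a b : ℂ) : ∀ ⦃x y : F⦄, rel a b x y → phi a b x = phi a b y := by
  rintro x y ⟨hx, rfl⟩
  rw [map_zero]
  simp only [S, Set.mem_insert_iff, Set.mem_singleton_iff] at hx
  rcases hx with rfl | rfl | rfl
  · simp only [map_sub, map_mul, phi_X]
    rw [relE1]; abel
  · simp only [map_sub, map_mul, map_smul, phi_X]
    rw [relE2]; abel
  · simp only [map_add, map_sub, map_mul, map_smul, phi_X]
    rw [relE3]; abel

noncomputable def psi (a b : ℂ) : RingQuot (rel a b) →ₐ[ℂ] Module.End ℂ V :=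
  RingQuot.liftAlgHom ℂ ⟨phi a b, phi_rel a b⟩

lemma psi_mk (a b : ℂ) (f : F) :
    psi a b (RingQuot.mkAlgHom ℂ (rel a b) f) = phi a b f := by
  exact RingQuot.liftAlgHom_mkAlgHom_apply ℂ (phi a b) (phi_rel a b) f

lemma T2_pow (a b : ℂ) (p : ℕ) :
    ((T a b 2) ^ p) (Finsupp.single ((0 : ℕ), (0 : ℕ), (0 : ℕ)) (1 : ℂ)) =
      Finsupp.single (0, 0, p) 1 := by
  induction p with
  | zero => simp
  | succ p ih =>
    rw [pow_succ', Module.End.mul_apply, ih, T2_single]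
    simp [coef]

lemma T1_pow (a b : ℂ) (n p : ℕ) :
    ((T a b 1) ^ n) (Finsupp.single ((0 : ℕ), (0 : ℕ), p) (1 : ℂ)) =
      Finsupp.single (0, n, p) 1 := by
  induction n with
  | zero => simp
  | succ n ih => rw [pow_succ', Module.End.mul_apply, ih, T1_single]

lemma T0_pow (a b : ℂ) (m n p : ℕ) :
    ((T a b 0) ^ m) (Finsupp.single ((0 : ℕ), n, p) (1 : ℂ)) =
      Finsupp.single (m, n, p) 1 := by
  induction m with
  | zero => simp
  | succ m ih => rw [pow_succ', Module.End.mul_apply, ih, T0_single]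

lemma indep (a b : ℂ) : LinearIndependent ℂ (fun e : ℕ × ℕ × ℕ =>
      RingQuot.mkAlgHom ℂ (rel a b) (X 0 ^ e.1 * X 1 ^ e.2.1 * X 2 ^ e.2.2)) := by
  let L : RingQuot (rel a b) →ₗ[ℂ] V :=
    (LinearMap.applyₗ (Finsupp.single ((0:ℕ),(0:ℕ),(0:ℕ)) (1:ℂ))).comp (psi a b).toLinearMap
  apply LinearIndependent.of_comp L
  have : (L ∘ fun e : ℕ × ℕ × ℕ =>
      RingQuot.mkAlgHom ℂ (rel a b) (X 0 ^ e.1 * X 1 ^ e.2.1 * X 2 ^ e.2.2)) =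
      fun e : ℕ × ℕ × ℕ => Finsupp.single e 1 := by
    funext e
    show (psi a b (RingQuot.mkAlgHom ℂ (rel a b) (X 0 ^ e.1 * X 1 ^ e.2.1 * X 2 ^ e.2.2)))
      (Finsupp.single ((0:ℕ),(0:ℕ),(0:ℕ)) (1:ℂ)) = Finsupp.single e 1
    rw [psi_mk, map_mul, map_mul, map_pow, map_pow, map_pow, phi_X, phi_X, phi_X,
      Module.End.mul_apply, Module.End.mul_apply, T2_pow, T1_pow, T0_pow]
  rw [this]
  exact (Finsupp.basisSingleOne (R := ℂ) (ι := ℕ × ℕ × ℕ)).linearIndependent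

section Span
variable (a b : ℂ)

local notation "π" => RingQuot.mkAlgHom ℂ (rel a b)

noncomputable def y (a b : ℂ) (i : Fin 3) : RingQuot (rel a b) :=
  RingQuot.mkAlgHom ℂ (rel a b) (X i)

lemma q_rel (r : F) (h : r ∈ S a b) : π r = 0 := by
  have := RingQuot.mkAlgHom_rel ℂ (show rel a b r 0 from ⟨h, rfl⟩)
  simpa using this

lemma q1 : y a b 1 * y a b 0 = y a b 0 * y a b 1 := by
  have := q_rel a b (X 1 * X 0 - X 0 * X 1) (by simp [S])
  rw [map_sub, map_mul, map_mul] at this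
  rw [← sub_eq_zero]; exact this

lemma q2 : y a b 2 * y a b 0 = y a b 0 * y a b 2 + a • (y a b 0 * y a b 0) := by
  have := q_rel a b (X 2 * X 0 - X 0 * X 2 - a • (X 0 * X 0)) (by simp [S])
  rw [map_sub, map_sub, map_smul, map_mul, map_mul, map_mul] at this
  rw [← sub_eq_zero, ← this]; abel

lemma q3 : y a b 2 * y a b 1 = y a b 1 * y a b 2 - (b - 2 * a) • (y a b 0 * y a b 1) := by
  have := q_rel a b (X 2 * X 1 - X 1 * X 2 + (b - 2 * a) • (X 0 * X 1)) (by simp [S])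
  rw [map_add, map_sub, map_smul, map_mul, map_mul, map_mul] at this
  rw [← sub_eq_zero, ← this]; abel

lemma c1 (m : ℕ) : y a b 1 * y a b 0 ^ m = y a b 0 ^ m * y a b 1 := by
  induction m with
  | zero => simp
  | succ m ih =>
    rw [pow_succ', mul_assoc, ← mul_assoc (y a b 1), q1, mul_assoc, ih, ← mul_assoc]

lemma c1' (n : ℕ) : y a b 0 * y a b 1 ^ n = y a b 1 ^ n * y a b 0 := by
  induction n with
  | zero => simp
  | succ n ih =>
    rw [pow_succ', mul_assoc, ← mul_assoc (y a b 0), ← q1, mul_assoc, ih, ← mul_assoc]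

lemma c2 (m : ℕ) : y a b 2 * y a b 0 ^ m =
    y a b 0 ^ m * y a b 2 + ((m : ℂ) * a) • (y a b 0 ^ (m + 1)) := by
  induction m with
  | zero => simp
  | succ m ih =>
    rw [pow_succ, ← mul_assoc, ih, add_mul, smul_mul_assoc, ← pow_succ,
      mul_assoc, q2, mul_add, ← mul_assoc, ← pow_succ, mul_smul_comm,
      ← mul_assoc, ← pow_succ]
    rw [show y a b 0 ^ (m+1) * y a b 0 = y a b 0 ^ (m+1+1) from (pow_succ _ _).symm,
      add_assoc, ← add_smul]
    congr 2
    push_cast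
    ring

lemma c3 (n : ℕ) : y a b 2 * y a b 1 ^ n =
    y a b 1 ^ n * y a b 2 - ((n : ℂ) * (b - 2 * a)) • (y a b 0 * y a b 1 ^ n) := by
  induction n with
  | zero => simp
  | succ n ih =>
    rw [pow_succ, ← mul_assoc, ih, sub_mul, smul_mul_assoc, mul_assoc (y a b 0),
      ← pow_succ, mul_assoc, q3, mul_sub, ← mul_assoc, ← pow_succ, mul_smul_comm,
      ← mul_assoc (y a b 1 ^ n), ← c1', mul_assoc, ← pow_succ, sub_sub, ← add_smul]
    congr 2
    push_cast
    ring
end Span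

section Final
variable (a b : ℂ)

lemma c1x (m : ℕ) (x : RingQuot (rel a b)) :
    y a b 1 * (y a b 0 ^ m * x) = y a b 0 ^ m * (y a b 1 * x) := by
  rw [← mul_assoc, c1, mul_assoc]

lemma c2x (m : ℕ) (x : RingQuot (rel a b)) :
    y a b 2 * (y a b 0 ^ m * x) =
      y a b 0 ^ m * (y a b 2 * x) + ((m : ℂ) * a) • (y a b 0 ^ (m + 1) * x) := by
  rw [← mul_assoc, c2, add_mul, smul_mul_assoc, mul_assoc]

lemma c3x (n : ℕ) (x : RingQuot (rel a b)) :
    y a b 2 * (y a b 1 ^ n * x) =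
      y a b 1 ^ n * (y a b 2 * x) - ((n : ℂ) * (b - 2 * a)) • (y a b 0 * (y a b 1 ^ n * x)) := by
  rw [← mul_assoc, c3, sub_mul, smul_mul_assoc, mul_assoc, mul_assoc]

noncomputable def mon (a b : ℂ) (e : ℕ × ℕ × ℕ) : RingQuot (rel a b) :=
  RingQuot.mkAlgHom ℂ (rel a b) (X 0 ^ e.1 * X 1 ^ e.2.1 * X 2 ^ e.2.2)

lemma mon_eq (e : ℕ × ℕ × ℕ) :
    mon a b e = y a b 0 ^ e.1 * (y a b 1 ^ e.2.1 * y a b 2 ^ e.2.2) := by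
  simp [mon, y, map_mul, map_pow, mul_assoc]

lemma mon_eq' (m n p : ℕ) :
    mon a b (m, n, p) = y a b 0 ^ m * (y a b 1 ^ n * y a b 2 ^ p) :=
  mon_eq a b (m, n, p)

lemma mul_mon_mem (i : Fin 3) (e : ℕ × ℕ × ℕ) :
    y a b i * mon a b e ∈ Submodule.span ℂ (Set.range (mon a b)) := by
  obtain ⟨m, n, p⟩ := e
  have hmem : ∀ e', mon a b e' ∈ Submodule.span ℂ (Set.range (mon a b)) :=
    fun e' => Submodule.subset_span ⟨e', rfl⟩
  fin_cases i
  · show y a b 0 * mon a b (m, n, p) ∈ _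
    have : y a b 0 * mon a b (m, n, p) = mon a b (m + 1, n, p) := by
      rw [mon_eq', mon_eq', ← mul_assoc, ← pow_succ']
    rw [this]; exact hmem _
  · show y a b 1 * mon a b (m, n, p) ∈ _
    have : y a b 1 * mon a b (m, n, p) = mon a b (m, n + 1, p) := by
      rw [mon_eq', mon_eq', c1x, ← mul_assoc (y a b 1), ← pow_succ']
    rw [this]; exact hmem _
  · show y a b 2 * mon a b (m, n, p) ∈ _
    have : y a b 2 * mon a b (m, n, p) = mon a b (m, n, p + 1) +
        ((m : ℂ) * a - (n : ℂ) * (b - 2 * a)) • mon a b (m + 1, n, p) := by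
      rw [mon_eq', mon_eq', mon_eq', c2x, c3x, ← pow_succ' (y a b 2), mul_sub, mul_smul_comm,
        ← mul_assoc (y a b 0 ^ m) (y a b 0), ← pow_succ]
      module
    rw [this]
    exact add_mem (hmem _) (Submodule.smul_mem _ _ (hmem _))

lemma mul_mem_span (f : F) :
    ∀ v ∈ Submodule.span ℂ (Set.range (mon a b)),
      RingQuot.mkAlgHom ℂ (rel a b) f * v ∈ Submodule.span ℂ (Set.range (mon a b)) := by
  induction f using FreeAlgebra.induction with
  | grade0 r =>
    intro v hv
    rw [AlgHom.commutes]
    simpa [Algebra.smul_def] using Submodule.smul_mem _ r hv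
  | grade1 i =>
    intro v hv
    induction hv using Submodule.span_induction with
    | mem x hx =>
      obtain ⟨e, rfl⟩ := hx
      exact mul_mon_mem a b i e
    | zero => simpa using Submodule.zero_mem _
    | add x z hx hz hx' hz' => rw [mul_add]; exact add_mem hx' hz'
    | smul r x hx hx' => rw [mul_smul_comm]; exact Submodule.smul_mem _ r hx'
  | mul f g hf hg =>
    intro v hv
    rw [map_mul, mul_assoc]
    exact hf _ (hg v hv)
  | add f g hf hg =>
    intro v hv
    rw [map_add, add_mul]
    exact add_mem (hf v hv) (hg v hv)

lemma span_top : Submodule.span ℂ (Set.range (mon a b)) = ⊤ := by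
  rw [eq_top_iff]
  intro z _
  obtain ⟨f, rfl⟩ := RingQuot.mkAlgHom_surjective ℂ (rel a b) z
  have h1 : (1 : RingQuot (rel a b)) ∈ Submodule.span ℂ (Set.range (mon a b)) := by
    have : mon a b (0, 0, 0) = 1 := by simp [mon]
    rw [← this]; exact Submodule.subset_span ⟨_, rfl⟩
  simpa using mul_mem_span a b f 1 h1

end Final

/-- the images in `F/I` of the monomials `x₁^{a₁} x₂^{a₂} x₃^{a₃}`
form a `ℂ`-basis of `F/I`. -/
theorem basis_R11_t_one (a b : ℂ) :
    LinearIndependent ℂ (fun e : ℕ × ℕ × ℕ =>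
      RingQuot.mkAlgHom ℂ (rel a b) (X 0 ^ e.1 * X 1 ^ e.2.1 * X 2 ^ e.2.2)) ∧
    Submodule.span ℂ (Set.range (fun e : ℕ × ℕ × ℕ =>
      RingQuot.mkAlgHom ℂ (rel a b) (X 0 ^ e.1 * X 1 ^ e.2.1 * X 2 ^ e.2.2))) = ⊤ := by
  exact ⟨indep a b, span_top a b⟩
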